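/- (Dual-weighted-residual estimate of an error generalized coordinate with explicit second-order remainder.) Let r : ℝ^N → ℝ^N be differentiable on an open convex set U ⊆ ℝ^N with derivative Lipschitz of constant M on U. Let w_ROM ∈ U with J := Dr(w_ROM) invertible, let w ∈ U satisfy r(w) = 0, and set δ := w − w_ROM. Let Θ be an N×N symmetric positive-definite matrix, Φ an N×n matrix of full column rank, and G := (ΦᵀΘΦ)⁻¹ΦᵀΘ. For a fixed index i, let the dual p ∈ ℝ^N solve Jᵀ p = −Gᵀ e_i, where e_i is the i-th canonical unit vector of ℝ^n. Then the dual-weighted residual pᵀ r(w_ROM) approximates the i-th error generalized coordinate (Gδ)_i to second order: |(Gδ)_i − pᵀ r(w_ROM)| ≤ ‖p‖ · (M/2) · ‖δ‖². -/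

import Mathlib

open Matrix

/-- Dual-weighted-residual estimate of an error generalized coordinate with explicit
second-order remainder: if the residual `r` is differentiable with `M`-Lipschitz
derivative on an open convex set `U`, `J` is the (invertible) Jacobian at `w_ROM`,
`r w = 0`, `G := (Φᵀ Θ Φ)⁻¹ Φᵀ Θ`, and the dual `p` solves `Jᵀ p = -Gᵀ e_i`, then
`|(G δ)_i - pᵀ r(w_ROM)| ≤ ‖p‖ (M/2) ‖δ‖²` with `δ := w - w_ROM` (Euclidean norms). -/
theorem stmt16 (N n : ℕ) (hn : n ≤ N)
    (r : EuclideanSpace ℝ (Fin N) → EuclideanSpace ℝ (Fin N))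
    (U : Set (EuclideanSpace ℝ (Fin N))) (hUo : IsOpen U) (hUc : Convex ℝ U)
    (f' : EuclideanSpace ℝ (Fin N) → (EuclideanSpace ℝ (Fin N) →L[ℝ] EuclideanSpace ℝ (Fin N)))
    (hderiv : ∀ x ∈ U, HasFDerivAt r (f' x) x)
    (M : ℝ) (hM : 0 ≤ M) (hlip : LipschitzOnWith M.toNNReal f' U)
    (wROM : EuclideanSpace ℝ (Fin N)) (hwROM : wROM ∈ U)
    (J : Matrix (Fin N) (Fin N) ℝ)
    (hJ : ∀ v : EuclideanSpace ℝ (Fin N), (f' wROM v : Fin N → ℝ) = J.mulVec v)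
    (hJunit : IsUnit J.det)
    (w : EuclideanSpace ℝ (Fin N)) (hw : w ∈ U) (hres : r w = 0)
    (Θ : Matrix (Fin N) (Fin N) ℝ) (hΘ : Θ.PosDef)
    (Φ : Matrix (Fin N) (Fin n) ℝ) (hΦ : Φ.rank = n)
    (G : Matrix (Fin n) (Fin N) ℝ) (hG : G = (Φᵀ * Θ * Φ)⁻¹ * Φᵀ * Θ)
    (i : Fin n) (p : EuclideanSpace ℝ (Fin N))
    (hp : Jᵀ.mulVec p = -(Gᵀ.mulVec (Pi.single i 1))) :
    |G.mulVec (w - wROM) i - (p : Fin N → ℝ) ⬝ᵥ (r wROM : Fin N → ℝ)| ≤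
      ‖p‖ * (M / 2) * ‖w - wROM‖ ^ 2 := by
  set δ : EuclideanSpace ℝ (Fin N) := w - wROM with hδ
  have hmem : ∀ t ∈ Set.Icc (0:ℝ) 1, wROM + t • δ ∈ U := by
    intro t ht
    have h : wROM + t • δ = (1 - t) • wROM + t • w := by
      rw [hδ, smul_sub, sub_smul, one_smul]; abel
    rw [h]
    exact hUc hwROM hw (by linarith [ht.2]) ht.1 (by ring)
  set g : ℝ → EuclideanSpace ℝ (Fin N) :=
    fun t => r (wROM + t • δ) - r wROM - t • (f' wROM δ) with hg
  have hgderiv : ∀ t ∈ Set.Icc (0:ℝ) 1,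
      HasDerivAt g (f' (wROM + t • δ) δ - f' wROM δ) t := by
    intro t ht
    have hγ : HasDerivAt (fun t : ℝ => wROM + t • δ) δ t := by
      simpa using ((hasDerivAt_id t).smul_const δ).const_add wROM
    have h1 : HasDerivAt (fun t : ℝ => r (wROM + t • δ)) (f' (wROM + t • δ) δ) t := by
      exact (hderiv _ (hmem t ht)).comp_hasDerivAt t hγ
    have h2 : HasDerivAt (fun t : ℝ => t • (f' wROM δ)) (f' wROM δ) t := by
      simpa using (hasDerivAt_id t).smul_const (f' wROM δ)
    exact (h1.sub_const (r wROM)).sub h2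
  have key : ‖g 1‖ ≤ M / 2 * ‖δ‖ ^ 2 * 1 ^ 2 := by
    refine image_norm_le_of_norm_deriv_right_le_deriv_boundary
      (f := g) (f' := fun t => f' (wROM + t • δ) δ - f' wROM δ) (a := 0) (b := 1)
      (B := fun t => M / 2 * ‖δ‖ ^ 2 * t ^ 2) (B' := fun t => M * ‖δ‖ ^ 2 * t)
      (fun t ht => ((hgderiv t ht).continuousAt).continuousWithinAt)
      (fun t ht => ((hgderiv t (Set.mem_Icc_of_Ico ht)).hasDerivWithinAt))
      (by simp [hg])
      (fun t => by
        have h := (hasDerivAt_pow 2 t).const_mul (M / 2 * ‖δ‖ ^ 2)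
        norm_num at h
        show HasDerivAt _ (M * ‖δ‖ ^ 2 * t) t
        refine h.congr_deriv ?_
        ring)
      ?_ (Set.right_mem_Icc.2 zero_le_one)
    intro t ht
    have ht0 : (0:ℝ) ≤ t := ht.1
    have htI : t ∈ Set.Icc (0:ℝ) 1 := ⟨ht.1, ht.2.le⟩
    have h1 : ‖f' (wROM + t • δ) δ - f' wROM δ‖ ≤ ‖f' (wROM + t • δ) - f' wROM‖ * ‖δ‖ := by
      rw [← ContinuousLinearMap.sub_apply]
      exact ContinuousLinearMap.le_opNorm _ δ
    have h2 : ‖f' (wROM + t • δ) - f' wROM‖ ≤ M * ‖(wROM + t • δ) - wROM‖ := by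
      have h := hlip.dist_le_mul (wROM + t • δ) (hmem t htI) wROM hwROM
      rw [dist_eq_norm, dist_eq_norm] at h
      calc ‖f' (wROM + t • δ) - f' wROM‖ ≤ ↑M.toNNReal * ‖(wROM + t • δ) - wROM‖ := h
        _ ≤ M * ‖(wROM + t • δ) - wROM‖ := by
            exact mul_le_mul_of_nonneg_right (by simp [Real.coe_toNNReal _ hM]) (norm_nonneg _)
    have h3 : ‖(wROM + t • δ) - wROM‖ = t * ‖δ‖ := by
      simp [norm_smul, abs_of_nonneg ht0]
    calc ‖f' (wROM + t • δ) δ - f' wROM δ‖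
        ≤ ‖f' (wROM + t • δ) - f' wROM‖ * ‖δ‖ := h1
      _ ≤ (M * (t * ‖δ‖)) * ‖δ‖ := by
          rw [← h3]
          exact mul_le_mul_of_nonneg_right h2 (norm_nonneg _)
      _ = M * ‖δ‖ ^ 2 * t := by ring
  have hone : wROM + (1:ℝ) • δ = w := by rw [hδ, one_smul]; abel
  have hg1 : g 1 = -(r wROM) - f' wROM δ := by
    rw [hg]
    show r (wROM + (1:ℝ) • δ) - r wROM - (1:ℝ) • (f' wROM δ) = _
    rw [hone, hres, one_smul]
    abel
  have hGδ : G.mulVec (w - wROM) i = (Gᵀ.mulVec (Pi.single i 1)) ⬝ᵥ ((w - wROM : EuclideanSpace ℝ (Fin N)) : Fin N → ℝ) := by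
    simp [Matrix.mulVec, dotProduct, Matrix.transpose_apply, Pi.single_apply,
      mul_ite, ite_mul, mul_one, mul_zero, zero_mul, Finset.sum_ite_eq, Finset.sum_ite_eq']
  have hpf : (p : Fin N → ℝ) ⬝ᵥ ((f' wROM δ : EuclideanSpace ℝ (Fin N)) : Fin N → ℝ)
      = -(G.mulVec (w - wROM) i) := by
    rw [hJ δ, Matrix.dotProduct_mulVec, ← Matrix.mulVec_transpose, hp, hGδ]
    simp [neg_dotProduct, hδ]
    ring
  have hkey2 : G.mulVec (w - wROM) i - (p : Fin N → ℝ) ⬝ᵥ (r wROM : Fin N → ℝ)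
      = (p : Fin N → ℝ) ⬝ᵥ ((g 1 : EuclideanSpace ℝ (Fin N)) : Fin N → ℝ) := by
    have hfun : ((g 1 : EuclideanSpace ℝ (Fin N)) : Fin N → ℝ)
        = -((r wROM : EuclideanSpace ℝ (Fin N)) : Fin N → ℝ)
          - ((f' wROM δ : EuclideanSpace ℝ (Fin N)) : Fin N → ℝ) := by
      rw [hg1]
      rfl
    rw [hfun, dotProduct_sub, dotProduct_neg, hpf]
    ring
  have hCS : |(p : Fin N → ℝ) ⬝ᵥ ((g 1 : EuclideanSpace ℝ (Fin N)) : Fin N → ℝ)| ≤ ‖p‖ * ‖g 1‖ := by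
    have h := abs_real_inner_le_norm p (g 1)
    have he : (inner ℝ p (g 1) : ℝ)
        = (p : Fin N → ℝ) ⬝ᵥ ((g 1 : EuclideanSpace ℝ (Fin N)) : Fin N → ℝ) := by
      simp [PiLp.inner_apply, RCLike.inner_apply, dotProduct]
      exact Finset.sum_congr rfl fun x _ => mul_comm _ _
    rwa [he] at h
  rw [hkey2]
  calc |(p : Fin N → ℝ) ⬝ᵥ ((g 1 : EuclideanSpace ℝ (Fin N)) : Fin N → ℝ)|
      ≤ ‖p‖ * ‖g 1‖ := hCS
    _ ≤ ‖p‖ * (M / 2 * ‖δ‖ ^ 2 * 1 ^ 2) :=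
        mul_le_mul_of_nonneg_left key (norm_nonneg _)
    _ = ‖p‖ * (M / 2) * ‖w - wROM‖ ^ 2 := by rw [hδ]; ring
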